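/- Let a ≥ 1 and b_0, …, b_k ≥ 1 be positive integers with gcd(a, b_0, …, b_k) = 1, and let c ∈ ℂ be nonzero. Then the polynomial t^a − c·x_0^{b_0} ⋯ x_k^{b_k} is irreducible in the polynomial ring ℂ[x_0, …, x_k, t]. -/

import Mathlib

open Polynomial

section Kummer

open IntermediateField

variable {K : Type u} [Field K]

/-- Over a field containing a square root of `-1`, `X ^ 2 ^ s - C a` is irreducible
when `a` is not a square. -/
theorem X_pow_sub_C_irreducible_of_two_pow' {I : K} (hI : I ^ 2 = -1)
    {s : ℕ} (hs : s ≠ 0) {a : K} (ha : ∀ b : K, b ^ 2 ≠ a) :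
    Irreducible (X ^ (2 ^ s) - C a) := by
  induction s generalizing K a with
  | zero => exact absurd rfl hs
  | succ s IH =>
    rcases Nat.eq_zero_or_pos s with rfl | hs'
    · simpa using X_pow_sub_C_irreducible_of_prime Nat.prime_two ha
    · rw [pow_succ]
      apply X_pow_mul_sub_C_irreducible
        (X_pow_sub_C_irreducible_of_prime Nat.prime_two ha)
      intro E _ _ x hx
      have hint : IsIntegral K x := not_not.mp fun h ↦ by
        simpa only [degree_zero, degree_X_pow_sub_C (by norm_num : 0 < 2),
          WithBot.natCast_ne_bot] using congr_arg degree (hx.symm.trans (dif_neg h))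
      apply IH (I := algebraMap K K⟮x⟯ I)
        (by rw [← map_pow, hI, map_neg, map_one]) hs'.ne'
      intro b hb
      have hnb : (Algebra.norm K) b ^ 2 = -a := by
        rw [← map_pow, hb, ← adjoin.powerBasis_gen hint,
          Algebra.PowerBasis.norm_gen_eq_coeff_zero_minpoly]
        simp [adjoin.powerBasis_gen hint, minpoly_gen, hx]
      exact ha (I * Algebra.norm K b) (by rw [mul_pow, hI, hnb]; ring)

/-- Over a field containing a square root of `-1`, `X ^ n - C a` is irreducible
when `a` is not a `p`-th power for every prime `p ∣ n`. -/
theorem X_pow_sub_C_irreducible_of_sqrt_neg_one {I : K} (hI : I ^ 2 = -1)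
    {n : ℕ} (hn : n ≠ 0) {a : K}
    (ha : ∀ p : ℕ, p.Prime → p ∣ n → ∀ b : K, b ^ p ≠ a) :
    Irreducible (X ^ n - C a) := by
  obtain ⟨s, m, hm, rfl⟩ := Nat.exists_eq_two_pow_mul_odd hn
  have hirr : Irreducible (X ^ m - C a) :=
    X_pow_sub_C_irreducible_of_odd hm (fun p hp hpm => ha p hp (hpm.mul_left _))
  rcases Nat.eq_zero_or_pos s with rfl | hs'
  · simpa using hirr
  · apply X_pow_mul_sub_C_irreducible hirr
    intro E _ _ x hx
    have hm0 : 0 < m := hm.pos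
    have hint : IsIntegral K x := not_not.mp fun h ↦ by
      simpa only [degree_zero, degree_X_pow_sub_C hm0,
        WithBot.natCast_ne_bot] using congr_arg degree (hx.symm.trans (dif_neg h))
    apply X_pow_sub_C_irreducible_of_two_pow' (I := algebraMap K K⟮x⟯ I)
      (by rw [← map_pow, hI, map_neg, map_one]) hs'.ne'
    intro b hb
    have hnb : (Algebra.norm K) b ^ 2 = a := by
      rw [← map_pow, hb, ← adjoin.powerBasis_gen hint,
        Algebra.PowerBasis.norm_gen_eq_coeff_zero_minpoly]
      simp [adjoin.powerBasis_gen hint, minpoly_gen, hx, hm.neg_one_pow, hm0.ne]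
    exact ha 2 Nat.prime_two (Dvd.dvd.mul_right (dvd_pow_self 2 hs'.ne') m)
      (Algebra.norm K b) hnb

end Kummer

theorem prime_mv_X {k : ℕ} (i : Fin (k + 1)) :
    Prime (MvPolynomial.X i : MvPolynomial (Fin (k + 1)) ℂ) := by
  let e := (MvPolynomial.renameEquiv ℂ (Equiv.swap i 0)).trans (MvPolynomial.finSuccEquiv ℂ k)
  rw [← MulEquiv.prime_iff e]
  have : e (MvPolynomial.X i) = Polynomial.X := by
    simp [e, Equiv.swap_apply_left, MvPolynomial.finSuccEquiv_X_zero]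
  show Prime (e (MvPolynomial.X i))
  rw [this]
  exact Polynomial.prime_X

/-- Let `a ≥ 1` and `b_0, …, b_k ≥ 1` be positive integers with
`gcd(a, b_0, …, b_k) = 1` and let `c ∈ ℂ` be nonzero.  Then the polynomial
`t^a − c·x_0^{b_0} ⋯ x_k^{b_k}` is irreducible in `ℂ[x_0, …, x_k, t]`. -/
theorem stmt_2 (k a : ℕ) (ha : 0 < a) (b : Fin (k + 1) → ℕ) (hb : ∀ i, 0 < b i)
    (hgcd : Nat.gcd a (Finset.univ.gcd b) = 1) (c : ℂ) (hc : c ≠ 0) :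
    Irreducible ((X : (MvPolynomial (Fin (k + 1)) ℂ)[X]) ^ a
      - C (MvPolynomial.C c * ∏ i, MvPolynomial.X i ^ b i)) := by
  set R := MvPolynomial (Fin (k + 1)) ℂ with hR
  set K := FractionRing R with hK
  set m : R := MvPolynomial.C c * ∏ i, MvPolynomial.X i ^ b i with hm
  have hmonic : (X ^ a - C m).Monic := monic_X_pow_sub_C m ha.ne'
  rw [hmonic.irreducible_iff_irreducible_map_fraction_map (K := K)]
  rw [Polynomial.map_sub, Polynomial.map_pow, map_X, map_C]
  apply X_pow_sub_C_irreducible_of_sqrt_neg_one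
    (I := algebraMap R K (MvPolynomial.C Complex.I))
    (by rw [← map_pow, ← map_pow, Complex.I_sq, map_neg, map_neg, map_one, map_one]) ha.ne'
  intro p hp hpa z hz
  -- choose i with ¬ p ∣ b i
  have hpb : ¬ p ∣ Finset.univ.gcd b := fun h =>
    Nat.Prime.one_lt hp |>.ne' (Nat.dvd_one.mp (hgcd ▸ Nat.dvd_gcd hpa h))
  have hi : ∃ i, ¬ p ∣ b i := by
    by_contra h
    push_neg at h
    exact hpb (Finset.dvd_gcd fun i _ => h i)
  obtain ⟨i, hbi⟩ := hi
  -- write z as a fraction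
  obtain ⟨g, h, hh, rfl⟩ := IsFractionRing.div_surjective (A := R) z
  have hh0 : h ≠ 0 := nonZeroDivisors.ne_zero hh
  have hhK : algebraMap R K h ≠ 0 := fun e =>
    hh0 (IsFractionRing.injective R K (e.trans (map_zero _).symm))
  have key : g ^ p = m * h ^ p := by
    apply IsFractionRing.injective R K
    rw [map_mul, map_pow, map_pow, ← hz, div_pow, div_mul_eq_mul_div, eq_div_iff
      (pow_ne_zero _ hhK), mul_comm]
  -- m ≠ 0
  have hm0 : m ≠ 0 := by
    apply mul_ne_zero
    · simpa [MvPolynomial.C_eq_zero] using hc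
    · exact Finset.prod_ne_zero_iff.mpr fun j _ =>
        pow_ne_zero _ (MvPolynomial.X_ne_zero j)
  have hg0 : g ≠ 0 := by
    intro e
    apply hm0
    have := key
    rw [e, zero_pow hp.ne_zero] at this
    rcases mul_eq_zero.mp this.symm with h' | h'
    · exact h'
    · exact absurd h' (pow_ne_zero _ hh0)
  -- count multiplicity of the prime X i on both sides
  have hq : Prime (MvPolynomial.X i : R) := prime_mv_X i
  have hfg : FiniteMultiplicity (MvPolynomial.X i : R) g :=
    FiniteMultiplicity.of_not_isUnit hq.not_isUnit hg0
  have hfh : FiniteMultiplicity (MvPolynomial.X i : R) h :=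
    FiniteMultiplicity.of_not_isUnit hq.not_isUnit hh0
  have hmm : emultiplicity (MvPolynomial.X i : R) m = (b i : ℕ∞) := by
    rw [hm, emultiplicity_mul hq, Finset.emultiplicity_prod hq]
    have h1 : emultiplicity (MvPolynomial.X i : R) (MvPolynomial.C c) = 0 := by
      refine emultiplicity_eq_zero.mpr fun hdvd => hq.not_unit ?_
      exact isUnit_of_dvd_unit hdvd (hc.isUnit.map MvPolynomial.C)
    have h2 : ∀ j : Fin (k + 1),
        emultiplicity (MvPolynomial.X i : R) (MvPolynomial.X j ^ b j)
          = if j = i then (b i : ℕ∞) else 0 := by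
      intro j
      rcases eq_or_ne j i with rfl | hji
      · simpa using emultiplicity_pow_self_of_prime hq (b j)
      · rw [if_neg hji, emultiplicity_pow hq]
        have : emultiplicity (MvPolynomial.X i : R) (MvPolynomial.X j) = 0 := by
          refine emultiplicity_eq_zero.mpr fun hdvd => ?_
          obtain ⟨d, hd⟩ := hdvd
          have := congrArg (MvPolynomial.aeval
            (fun t : Fin (k + 1) => if t = i then (0 : ℂ) else 1)) hd
          simp [hji] at this
        rw [this, mul_zero]
    rw [Finset.sum_congr rfl fun j _ => h2 j, h1, zero_add]
    simp
  have keymult := congrArg (emultiplicity (MvPolynomial.X i : R)) key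
  rw [emultiplicity_pow hq, emultiplicity_mul hq, emultiplicity_pow hq, hmm,
    hfg.emultiplicity_eq_multiplicity, hfh.emultiplicity_eq_multiplicity] at keymult
  -- translate to ℕ
  set Mg := multiplicity (MvPolynomial.X i : R) g
  set Mh := multiplicity (MvPolynomial.X i : R) h
  have keyn : p * Mg = b i + p * Mh := by
    have : ((p * Mg : ℕ) : ℕ∞) = ((b i + p * Mh : ℕ) : ℕ∞) := by
      push_cast
      exact_mod_cast keymult
    exact_mod_cast this
  apply hbi
  have h1 : p ∣ p * Mg - p * Mh := Nat.dvd_sub (dvd_mul_right p Mg) (dvd_mul_right p Mh)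
  have h2 : p * Mg - p * Mh = b i := by omega
  rwa [h2] at h1
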